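/- Gill's lemma: Suppose X_n(s) → f(s) in probability as n → ∞ for each s ∈ [0,τ], where f is a deterministic Lebesgue-integrable function on [0,τ]. Suppose additionally that for every δ > 0 there exists an integrable function k_δ ≥ 0 on [0,τ] with liminf_n P(|X_n(s)| ≤ k_δ(s) for all s ∈ [0,τ]) ≥ 1 − δ. Then sup_{t ∈ [0,τ]} |∫_0^t X_n(s) ds − ∫_0^t f(s) ds| → 0 in probability. -/

import Mathlib

open MeasureTheory Filter
open scoped ENNReal

/-- Gill's lemma: if `Xₙ(s) → f(s)` in probability for each `s ∈ [0,τ]`, `f`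
integrable, and for each `δ > 0` there is an integrable dominating function
`k_δ ≥ 0` with `liminfₙ P(|Xₙ(s)| ≤ k_δ(s) ∀ s) ≥ 1 − δ`, then
`sup_{t∈[0,τ]} |∫_0^t Xₙ − ∫_0^t f| → 0` in probability. -/
theorem gill_lemma
    {Ω : Type*} [MeasurableSpace Ω] (μ : Measure Ω) [IsProbabilityMeasure μ]
    (τ : ℝ) (hτ : 0 ≤ τ)
    (X : ℕ → ℝ → Ω → ℝ) (f : ℝ → ℝ)
    (hX_meas : ∀ n, Measurable (Function.uncurry (X n)))
    (hX_int : ∀ n, ∀ᵐ ω ∂μ, IntegrableOn (fun s => X n s ω) (Set.Icc 0 τ))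
    (hf_int : IntegrableOn f (Set.Icc 0 τ))
    (hconv : ∀ s ∈ Set.Icc (0:ℝ) τ, ∀ ε > (0:ℝ),
      Tendsto (fun n => μ {ω | ε < |X n s ω - f s|}) atTop (nhds 0))
    (hdom : ∀ δ > (0:ℝ), ∃ k : ℝ → ℝ,
      IntegrableOn k (Set.Icc 0 τ) ∧ (∀ s, 0 ≤ k s) ∧
      (1 : ENNReal) - ENNReal.ofReal δ ≤
        atTop.liminf (fun n => μ {ω | ∀ s ∈ Set.Icc (0:ℝ) τ, |X n s ω| ≤ k s})) :
    ∀ ε > (0:ℝ), Tendsto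
      (fun n => μ {ω | ε < ⨆ t ∈ Set.Icc (0:ℝ) τ,
          |(∫ s in (0:ℝ)..t, X n s ω) - ∫ s in (0:ℝ)..t, f s|})
      atTop (nhds 0) := by
  classical
  intro ε hε
  rw [ENNReal.tendsto_atTop_zero]
  intro η hη
  -- choose a small real δ
  obtain ⟨δ, hδ0, hδ1, hδη⟩ : ∃ δ : ℝ, 0 < δ ∧ δ < 1 ∧
      ENNReal.ofReal δ + ENNReal.ofReal δ ≤ η := by
    rcases eq_or_ne η ∞ with h | h
    · exact ⟨1/2, by norm_num, by norm_num, by simp [h]⟩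
    · have h0 : 0 < η.toReal := ENNReal.toReal_pos hη.ne' h
      have h4 : (0:ℝ) ≤ min (1/4) (η.toReal/4) := by positivity
      refine ⟨min (1/4) (η.toReal/4), by positivity, ?_, ?_⟩
      · exact lt_of_le_of_lt (min_le_left _ _) (by norm_num)
      · have h1 : min (1/4) (η.toReal/4) ≤ η.toReal/4 := min_le_right _ _
        calc ENNReal.ofReal (min (1/4) (η.toReal/4)) + ENNReal.ofReal (min (1/4) (η.toReal/4))
            = ENNReal.ofReal (min (1/4) (η.toReal/4) + min (1/4) (η.toReal/4)) :=
              (ENNReal.ofReal_add h4 h4).symm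
          _ ≤ ENNReal.ofReal η.toReal := ENNReal.ofReal_le_ofReal (by linarith)
          _ = η := ENNReal.ofReal_toReal h
  obtain ⟨k, hk_int, hk0, hkliminf⟩ := hdom (δ/2) (by positivity)
  -- measurable representatives of f and k
  have hfm : AEStronglyMeasurable f (volume.restrict (Set.Icc (0:ℝ) τ)) := hf_int.1
  have hkm : AEStronglyMeasurable k (volume.restrict (Set.Icc (0:ℝ) τ)) := hk_int.1
  set f' : ℝ → ℝ := hfm.mk f with hf'def
  set k' : ℝ → ℝ := hkm.mk k with hk'def
  have hf'sm : StronglyMeasurable f' := hfm.stronglyMeasurable_mk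
  have hk'sm : StronglyMeasurable k' := hkm.stronglyMeasurable_mk
  have hff' : f =ᵐ[volume.restrict (Set.Icc (0:ℝ) τ)] f' := hfm.ae_eq_mk
  have hkk' : k =ᵐ[volume.restrict (Set.Icc (0:ℝ) τ)] k' := hkm.ae_eq_mk
  have hf'_int : IntegrableOn f' (Set.Icc (0:ℝ) τ) := hf_int.congr hff'
  set C : ℝ → ℝ := fun s => |k' s| + |f' s| with hCdef
  have hCm : Measurable C := hk'sm.measurable.abs.add hf'sm.measurable.abs
  have hC0 : ∀ s, 0 ≤ C s := fun s => add_nonneg (abs_nonneg _) (abs_nonneg _)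
  have hC_int : Integrable C (volume.restrict (Set.Icc (0:ℝ) τ)) := by
    refine (hk_int.abs.add hf_int.abs).congr ?_
    filter_upwards [hff', hkk'] with s h1 h2
    simp only [hCdef, Pi.add_apply, h1, h2]
  -- the truncated deviation
  set G : ℕ → ℝ → Ω → ℝ≥0∞ :=
    fun n s ω => ENNReal.ofReal (min |X n s ω - f' s| (C s)) with hGdef
  have hGunc : ∀ n, Measurable (Function.uncurry (G n)) := by
    intro n
    apply ENNReal.measurable_ofReal.comp
    exact Measurable.min ((hX_meas n).sub (hf'sm.measurable.comp measurable_fst)).abs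
      (hCm.comp measurable_fst)
  have hXsec : ∀ n s, Measurable (fun ω => X n s ω) :=
    fun n s => (hX_meas n).comp measurable_prodMk_left
  have hXsec' : ∀ n ω, Measurable (fun s => X n s ω) :=
    fun n ω => (hX_meas n).comp (measurable_id.prodMk measurable_const)
  have hGle : ∀ n s ω, G n s ω ≤ ENNReal.ofReal (C s) :=
    fun n s ω => ENNReal.ofReal_le_ofReal (min_le_right _ _)
  -- Step A+B: expectation of the integrated truncated deviation tends to 0
  have hΦ : Tendsto (fun n => ∫⁻ s in Set.Icc (0:ℝ) τ, ∫⁻ ω, G n s ω ∂μ) atTop (nhds 0) := by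
    have hlim : ∀ᵐ s ∂(volume.restrict (Set.Icc (0:ℝ) τ)),
        Tendsto (fun n => ∫⁻ ω, G n s ω ∂μ) atTop (nhds 0) := by
      filter_upwards [ae_restrict_mem measurableSet_Icc, hff'] with s hs hfs
      rw [ENNReal.tendsto_atTop_zero]
      intro θ hθ
      obtain ⟨ε', hε'0, hε'θ⟩ : ∃ ε' : ℝ, 0 < ε' ∧ ENNReal.ofReal ε' < θ := by
        rcases eq_or_ne θ ⊤ with h | h
        · exact ⟨1, one_pos, by simp [h]⟩
        · have h0 : 0 < θ.toReal := ENNReal.toReal_pos hθ.ne' h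
          refine ⟨θ.toReal/2, by positivity, ?_⟩
          calc ENNReal.ofReal (θ.toReal/2) < ENNReal.ofReal θ.toReal := by
                rw [ENNReal.ofReal_lt_ofReal_iff h0]; linarith
            _ = θ := ENNReal.ofReal_toReal h
      have hsets : ∀ n, MeasurableSet {ω | ε' < |X n s ω - f s|} := fun n =>
        measurableSet_lt measurable_const ((hXsec n s).sub_const _).abs
      have hb : ∀ n, ∫⁻ ω, G n s ω ∂μ
          ≤ ENNReal.ofReal ε' + ENNReal.ofReal (C s) * μ {ω | ε' < |X n s ω - f s|} := by
        intro n
        have hpt : ∀ ω, G n s ω ≤ ENNReal.ofReal ε'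
            + Set.indicator {ω | ε' < |X n s ω - f s|} (fun _ => ENNReal.ofReal (C s)) ω := by
          intro ω
          by_cases h : ε' < |X n s ω - f s|
          · rw [Set.indicator_of_mem (show ω ∈ {ω | ε' < |X n s ω - f s|} from h)]
            exact le_trans (hGle n s ω) (self_le_add_left _ _)
          · rw [Set.indicator_of_notMem (show ω ∉ {ω | ε' < |X n s ω - f s|} from h), add_zero]
            push_neg at h
            refine le_trans (ENNReal.ofReal_le_ofReal ?_) le_rfl
            calc min |X n s ω - f' s| (C s) ≤ |X n s ω - f' s| := min_le_left _ _
              _ ≤ ε' := by rw [← hfs]; exact h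
        calc ∫⁻ ω, G n s ω ∂μ ≤ ∫⁻ ω, (ENNReal.ofReal ε'
              + Set.indicator {ω | ε' < |X n s ω - f s|} (fun _ => ENNReal.ofReal (C s)) ω) ∂μ :=
              lintegral_mono hpt
          _ = ENNReal.ofReal ε' + ENNReal.ofReal (C s) * μ {ω | ε' < |X n s ω - f s|} := by
              rw [lintegral_add_left measurable_const, lintegral_const, measure_univ, mul_one,
                lintegral_indicator (hsets n), setLIntegral_const]
      have htend : Tendsto (fun n => ENNReal.ofReal ε'
          + ENNReal.ofReal (C s) * μ {ω | ε' < |X n s ω - f s|}) atTop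
          (nhds (ENNReal.ofReal ε')) := by
        have h1 : Tendsto (fun n => ENNReal.ofReal (C s) * μ {ω | ε' < |X n s ω - f s|})
            atTop (nhds 0) := by
          have := ENNReal.Tendsto.const_mul (a := ENNReal.ofReal (C s))
            (hconv s hs ε' hε'0) (Or.inr ENNReal.ofReal_ne_top)
          simpa using this
        have h2 : Tendsto (fun _ : ℕ => ENNReal.ofReal ε') atTop (nhds (ENNReal.ofReal ε')) :=
          tendsto_const_nhds
        simpa using h2.add h1
      obtain ⟨N, hN⟩ := eventually_atTop.1 (htend.eventually_lt_const hε'θ)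
      exact ⟨N, fun n hn => (hb n).trans (hN n hn).le⟩
    have h := tendsto_lintegral_of_dominated_convergence
      (μ := volume.restrict (Set.Icc (0:ℝ) τ))
      (F := fun n s => ∫⁻ ω, G n s ω ∂μ) (f := fun _ => 0)
      (fun s => ENNReal.ofReal (C s))
      (fun n => Measurable.lintegral_prod_right (hGunc n))
      (fun n => ae_of_all _ fun s => by
        calc ∫⁻ ω, G n s ω ∂μ ≤ ∫⁻ _, ENNReal.ofReal (C s) ∂μ := lintegral_mono (hGle n s)
          _ = ENNReal.ofReal (C s) := by simp)
      hC_int.lintegral_lt_top.ne hlim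
    simpa using h
  -- swap the integrals
  have hswap : ∀ n, ∫⁻ s in Set.Icc (0:ℝ) τ, ∫⁻ ω, G n s ω ∂μ
      = ∫⁻ ω, (∫⁻ s in Set.Icc (0:ℝ) τ, G n s ω) ∂μ :=
    fun n => lintegral_lintegral_swap (hGunc n).aemeasurable
  have hI_meas : ∀ n, Measurable (fun ω => ∫⁻ s in Set.Icc (0:ℝ) τ, G n s ω) :=
    fun n => Measurable.lintegral_prod_left (hGunc n)
  -- the "Markov" sets
  set M : ℕ → Set Ω := fun n => {ω | ENNReal.ofReal ε ≤ ∫⁻ s in Set.Icc (0:ℝ) τ, G n s ω}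
    with hMdef
  have hMarkov : ∀ n, μ (M n) ≤ (∫⁻ ω, (∫⁻ s in Set.Icc (0:ℝ) τ, G n s ω) ∂μ) / ENNReal.ofReal ε :=
    fun n => meas_ge_le_lintegral_div (hI_meas n).aemeasurable
      (ne_of_gt (ENNReal.ofReal_pos.2 hε)) ENNReal.ofReal_ne_top
  have hM_ev : ∀ᶠ n in atTop, μ (M n) ≤ ENNReal.ofReal δ := by
    have ht : Tendsto (fun n => ∫⁻ ω, (∫⁻ s in Set.Icc (0:ℝ) τ, G n s ω) ∂μ) atTop (nhds 0) := by
      simpa only [hswap] using hΦ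
    have hpos : (0:ℝ≥0∞) < ENNReal.ofReal δ * ENNReal.ofReal ε :=
      ENNReal.mul_pos (ne_of_gt (ENNReal.ofReal_pos.2 hδ0)) (ne_of_gt (ENNReal.ofReal_pos.2 hε))
    filter_upwards [ht.eventually_lt_const hpos] with n hn
    refine (hMarkov n).trans ?_
    rw [ENNReal.div_le_iff_le_mul (Or.inl (ne_of_gt (ENNReal.ofReal_pos.2 hε)))
      (Or.inl ENNReal.ofReal_ne_top)]
    exact hn.le
  -- the domination sets
  set A : ℕ → Set Ω := fun n => {ω | ∀ s ∈ Set.Icc (0:ℝ) τ, |X n s ω| ≤ k s} with hAdef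
  have hA_ev : ∀ᶠ n in atTop, 1 - ENNReal.ofReal δ < μ (A n) := by
    refine eventually_lt_of_lt_liminf (lt_of_lt_of_le ?_ hkliminf)
    have h2 : ENNReal.ofReal (δ/2) < ENNReal.ofReal δ := by
      rw [ENNReal.ofReal_lt_ofReal_iff hδ0]; linarith
    rw [← ENNReal.ofReal_one, ← ENNReal.ofReal_sub _ (by positivity),
      ← ENNReal.ofReal_sub _ (by positivity), ENNReal.ofReal_lt_ofReal_iff (by linarith)]
    linarith
  -- a countable dense subset of [0, τ]
  have hDcount : (insert τ {x ∈ Set.Icc (0:ℝ) τ | ∃ q : ℚ, (q:ℝ) = x}).Countable := by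
    apply Set.Countable.insert
    have : {x ∈ Set.Icc (0:ℝ) τ | ∃ q : ℚ, (q:ℝ) = x} ⊆ Set.range (fun q : ℚ => (q:ℝ)) := by
      rintro x ⟨-, q, rfl⟩; exact ⟨q, rfl⟩
    exact (Set.countable_range _).mono this
  obtain ⟨u, hu⟩ := hDcount.exists_eq_range ⟨τ, Set.mem_insert _ _⟩
  have huD : ∀ j, u j ∈ Set.Icc (0:ℝ) τ := by
    intro j
    have : u j ∈ insert τ {x ∈ Set.Icc (0:ℝ) τ | ∃ q : ℚ, (q:ℝ) = x} := by
      rw [hu]; exact ⟨j, rfl⟩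
    rcases this with h | h
    · rw [h]; exact Set.right_mem_Icc.2 hτ
    · exact h.1
  -- measurability of the approximating sets
  have hH_meas : ∀ n t, t ∈ Set.Icc (0:ℝ) τ → Measurable (fun ω => ∫ s in (0:ℝ)..t, X n s ω) := by
    intro n t ht
    have heq : (fun ω => ∫ s in (0:ℝ)..t, X n s ω)
        = fun ω => ∫ s in Set.Ioc (0:ℝ) t, X n s ω := by
      funext ω
      exact intervalIntegral.integral_of_le ht.1
    rw [heq]
    exact (MeasureTheory.StronglyMeasurable.integral_prod_left
      ((hX_meas n).stronglyMeasurable)).measurable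
  set S' : ℕ → Set Ω := fun n =>
    ⋃ j, {ω | ε < |(∫ s in (0:ℝ)..(u j), X n s ω) - ∫ s in (0:ℝ)..(u j), f s|} with hS'def
  have hS'_meas : ∀ n, MeasurableSet (S' n) := by
    intro n
    refine MeasurableSet.iUnion fun j => ?_
    exact measurableSet_lt measurable_const ((hH_meas n (u j) (huD j)).sub_const _).abs
  -- the key pointwise facts, almost everywhere
  have hkey : ∀ n, ∀ᵐ ω ∂μ,
      ((ε < ⨆ t ∈ Set.Icc (0:ℝ) τ,
          |(∫ s in (0:ℝ)..t, X n s ω) - ∫ s in (0:ℝ)..t, f s|) ↔ ω ∈ S' n)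
      ∧ (ω ∈ A n → ω ∈ S' n → ω ∈ M n) := by
    intro n
    filter_upwards [hX_int n] with ω hint
    have hd_int : IntegrableOn (fun s => X n s ω - f s) (Set.Icc 0 τ) := hint.sub hf_int
    have hB0 : (0:ℝ) ≤ ∫ s in Set.Icc (0:ℝ) τ, |X n s ω - f s| :=
      integral_nonneg fun s => abs_nonneg _
    -- pointwise bound on the partial integrals
    have hHle : ∀ t ∈ Set.Icc (0:ℝ) τ,
        |(∫ s in (0:ℝ)..t, X n s ω) - ∫ s in (0:ℝ)..t, f s|
          ≤ ∫ s in Set.Icc (0:ℝ) τ, |X n s ω - f s| := by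
      intro t ht
      have hioc : Set.Ioc (0:ℝ) t ⊆ Set.Icc (0:ℝ) τ :=
        Set.Ioc_subset_Icc_self.trans (Set.Icc_subset_Icc_right ht.2)
      have hX_ii : IntervalIntegrable (fun s => X n s ω) volume 0 t := by
        rw [intervalIntegrable_iff_integrableOn_Ioc_of_le ht.1]
        exact hint.mono_set hioc
      have hf_ii : IntervalIntegrable f volume 0 t := by
        rw [intervalIntegrable_iff_integrableOn_Ioc_of_le ht.1]
        exact hf_int.mono_set hioc
      have h1 : (∫ s in (0:ℝ)..t, X n s ω) - ∫ s in (0:ℝ)..t, f s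
          = ∫ s in (0:ℝ)..t, (X n s ω - f s) :=
        (intervalIntegral.integral_sub hX_ii hf_ii).symm
      rw [h1]
      calc |∫ s in (0:ℝ)..t, (X n s ω - f s)| ≤ ∫ s in (0:ℝ)..t, |X n s ω - f s| :=
          intervalIntegral.abs_integral_le_integral_abs ht.1
        _ = ∫ s in Set.Ioc (0:ℝ) t, |X n s ω - f s| := intervalIntegral.integral_of_le ht.1
        _ ≤ ∫ s in Set.Icc (0:ℝ) τ, |X n s ω - f s| := by
            refine setIntegral_mono_set hd_int.abs ?_ (HasSubset.Subset.eventuallyLE hioc)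
            exact ae_of_all _ fun s => abs_nonneg _
    have hbdd : BddAbove (Set.range fun t => ⨆ _ : t ∈ Set.Icc (0:ℝ) τ,
        |(∫ s in (0:ℝ)..t, X n s ω) - ∫ s in (0:ℝ)..t, f s|) := by
      refine ⟨∫ s in Set.Icc (0:ℝ) τ, |X n s ω - f s|, ?_⟩
      rintro x ⟨t, rfl⟩
      dsimp only
      by_cases ht : t ∈ Set.Icc (0:ℝ) τ
      · rw [ciSup_pos ht]; exact hHle t ht
      · haveI : IsEmpty (t ∈ Set.Icc (0:ℝ) τ) := ⟨ht⟩
        rw [Real.iSup_of_isEmpty]; exact hB0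
    have hsup_le : ∀ {c : ℝ}, 0 ≤ c →
        (∀ t ∈ Set.Icc (0:ℝ) τ,
          |(∫ s in (0:ℝ)..t, X n s ω) - ∫ s in (0:ℝ)..t, f s| ≤ c) →
        (⨆ t ∈ Set.Icc (0:ℝ) τ,
          |(∫ s in (0:ℝ)..t, X n s ω) - ∫ s in (0:ℝ)..t, f s|) ≤ c := by
      intro c hc h
      exact Real.iSup_le (fun t => Real.iSup_le (fun ht => h t ht) hc) hc
    -- continuity of the partial integrals on [0, τ]
    have hHcont : ContinuousOn
        (fun t => (∫ s in (0:ℝ)..t, X n s ω) - ∫ s in (0:ℝ)..t, f s)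
        (Set.Icc (0:ℝ) τ) := by
      have h1 : ContinuousOn (fun t => ∫ s in Set.Ioc (0:ℝ) t, X n s ω) (Set.Icc 0 τ) :=
        intervalIntegral.continuousOn_primitive hint
      have h2 : ContinuousOn (fun t => ∫ s in Set.Ioc (0:ℝ) t, f s) (Set.Icc 0 τ) :=
        intervalIntegral.continuousOn_primitive hf_int
      refine (h1.sub h2).congr ?_
      intro t ht
      simp only [intervalIntegral.integral_of_le ht.1, Pi.sub_apply]
    have hiff : (ε < ⨆ t ∈ Set.Icc (0:ℝ) τ,
        |(∫ s in (0:ℝ)..t, X n s ω) - ∫ s in (0:ℝ)..t, f s|) ↔ ω ∈ S' n := by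
      constructor
      · intro hlt
        have hex : ∃ t ∈ Set.Icc (0:ℝ) τ,
            ε < |(∫ s in (0:ℝ)..t, X n s ω) - ∫ s in (0:ℝ)..t, f s| := by
          by_contra hcon
          push_neg at hcon
          exact absurd hlt (not_lt.2 (hsup_le hε.le hcon))
        obtain ⟨t, ht, hεt⟩ := hex
        have hD : ∃ j, ε < |(∫ s in (0:ℝ)..(u j), X n s ω) - ∫ s in (0:ℝ)..(u j), f s| := by
          rcases eq_or_lt_of_le ht.2 with heq | htτ
          · have hmem : τ ∈ insert τ {x ∈ Set.Icc (0:ℝ) τ | ∃ q : ℚ, (q:ℝ) = x} :=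
              Set.mem_insert _ _
            rw [hu] at hmem
            obtain ⟨j, hj⟩ := hmem
            exact ⟨j, by rw [hj, ← heq]; exact hεt⟩
          · have hq : ∀ m : ℕ, ∃ q : ℚ, t < (q:ℝ) ∧ (q:ℝ) < min τ (t + 1/(m+1)) := by
              intro m
              refine exists_rat_btwn (lt_min htτ ?_)
              have h1m : (0:ℝ) < 1/(m+1) := by positivity
              linarith
            choose q hq1 hq2 using hq
            have hqIcc : ∀ m, (q m : ℝ) ∈ Set.Icc (0:ℝ) τ := fun m =>
              ⟨le_trans ht.1 (hq1 m).le, le_trans (hq2 m).le (min_le_left _ _)⟩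
            have hqt : Tendsto (fun m => (q m : ℝ)) atTop (nhds t) := by
              have hup : Tendsto (fun m : ℕ => t + 1/((m:ℝ)+1)) atTop (nhds t) := by
                have h0 := tendsto_one_div_add_atTop_nhds_zero_nat (𝕜 := ℝ)
                have hc : Tendsto (fun _ : ℕ => t) atTop (nhds t) := tendsto_const_nhds
                simpa using hc.add h0
              refine tendsto_of_tendsto_of_tendsto_of_le_of_le tendsto_const_nhds hup
                (fun m => (hq1 m).le) (fun m => le_trans (hq2 m).le (min_le_right _ _))
            have hqtw : Tendsto (fun m => (q m : ℝ)) atTop (nhdsWithin t (Set.Icc (0:ℝ) τ)) :=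
              tendsto_nhdsWithin_of_tendsto_nhds_of_eventually_within _ hqt
                (Eventually.of_forall hqIcc)
            have hHt : Tendsto (fun m =>
                |(∫ s in (0:ℝ)..(q m : ℝ), X n s ω) - ∫ s in (0:ℝ)..(q m : ℝ), f s|) atTop
                (nhds |(∫ s in (0:ℝ)..t, X n s ω) - ∫ s in (0:ℝ)..t, f s|) :=
              ((continuous_abs.tendsto _).comp ((hHcont t ht).tendsto.comp hqtw))
            obtain ⟨m, hm⟩ := (hHt.eventually_const_lt hεt).exists
            have hmem : (q m : ℝ) ∈ insert τ {x ∈ Set.Icc (0:ℝ) τ | ∃ r : ℚ, (r:ℝ) = x} :=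
              Set.mem_insert_iff.2 (Or.inr ⟨hqIcc m, q m, rfl⟩)
            rw [hu] at hmem
            obtain ⟨j, hj⟩ := hmem
            exact ⟨j, by rw [hj]; exact hm⟩
        obtain ⟨j, hj⟩ := hD
        exact Set.mem_iUnion.2 ⟨j, hj⟩
      · intro hS
        obtain ⟨j, hj⟩ := Set.mem_iUnion.1 hS
        have h1 : |(∫ s in (0:ℝ)..(u j), X n s ω) - ∫ s in (0:ℝ)..(u j), f s|
            ≤ ⨆ t ∈ Set.Icc (0:ℝ) τ,
              |(∫ s in (0:ℝ)..t, X n s ω) - ∫ s in (0:ℝ)..t, f s| := by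
          have h2 := le_ciSup hbdd (u j)
          rw [ciSup_pos (huD j)] at h2
          exact h2
        exact lt_of_lt_of_le hj h1
    refine ⟨hiff, ?_⟩
    intro hA hS'
    have hεsup := hiff.mpr hS'
    have hsupB : (⨆ t ∈ Set.Icc (0:ℝ) τ,
        |(∫ s in (0:ℝ)..t, X n s ω) - ∫ s in (0:ℝ)..t, f s|)
        ≤ ∫ s in Set.Icc (0:ℝ) τ, |X n s ω - f s| := hsup_le hB0 hHle
    have hmin_nonneg : ∀ s, 0 ≤ min |X n s ω - f' s| (C s) :=
      fun s => le_min (abs_nonneg _) (hC0 s)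
    have hmin_int : Integrable (fun s => min |X n s ω - f' s| (C s))
        (volume.restrict (Set.Icc (0:ℝ) τ)) := by
      refine hC_int.mono ?_ ?_
      · exact (((hXsec' n ω).sub hf'sm.measurable).abs.min hCm).aestronglyMeasurable
      · refine ae_of_all _ fun s => ?_
        rw [Real.norm_eq_abs, Real.norm_eq_abs, abs_of_nonneg (hmin_nonneg s),
          abs_of_nonneg (hC0 s)]
        exact min_le_right _ _
    have hBI : (∫ s in Set.Icc (0:ℝ) τ, |X n s ω - f s|)
        = (∫⁻ s in Set.Icc (0:ℝ) τ, G n s ω).toReal := by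
      have hcong : (fun s => |X n s ω - f s|) =ᵐ[volume.restrict (Set.Icc (0:ℝ) τ)]
          (fun s => min |X n s ω - f' s| (C s)) := by
        filter_upwards [hff', hkk', ae_restrict_mem measurableSet_Icc] with s h1 h2 hs
        have hXk : |X n s ω| ≤ k s := hA s hs
        have hle : |X n s ω - f s| ≤ C s := by
          calc |X n s ω - f s| ≤ |X n s ω| + |f s| := abs_sub _ _
            _ ≤ k s + |f s| := add_le_add_left hXk _
            _ = |k' s| + |f' s| := by rw [← h2, ← h1, abs_of_nonneg (hk0 s)]
          
        rw [← h1]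
        exact (min_eq_left hle).symm
      have h2 : (∫ s in Set.Icc (0:ℝ) τ, |X n s ω - f s|)
          = ∫ s in Set.Icc (0:ℝ) τ, min |X n s ω - f' s| (C s) :=
        integral_congr_ae hcong
      have h3 := ofReal_integral_eq_lintegral_ofReal hmin_int (ae_of_all _ hmin_nonneg)
      rw [h2, ← ENNReal.toReal_ofReal (integral_nonneg hmin_nonneg), h3]
    show ENNReal.ofReal ε ≤ ∫⁻ s in Set.Icc (0:ℝ) τ, G n s ω
    have hεs : ε < (∫⁻ s in Set.Icc (0:ℝ) τ, G n s ω).toReal :=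
      lt_of_lt_of_le hεsup (hsupB.trans_eq hBI)
    calc ENNReal.ofReal ε
        ≤ ENNReal.ofReal ((∫⁻ s in Set.Icc (0:ℝ) τ, G n s ω).toReal) :=
          ENNReal.ofReal_le_ofReal hεs.le
      _ ≤ _ := ENNReal.ofReal_toReal_le
  -- assembling everything
  have hS_ev : ∀ᶠ n in atTop,
      μ {ω | ε < ⨆ t ∈ Set.Icc (0:ℝ) τ,
          |(∫ s in (0:ℝ)..t, X n s ω) - ∫ s in (0:ℝ)..t, f s|} ≤ η := by
    filter_upwards [hM_ev, hA_ev] with n hM1 hA1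
    have hae := hkey n
    have hSS' : μ {ω | ε < ⨆ t ∈ Set.Icc (0:ℝ) τ,
        |(∫ s in (0:ℝ)..t, X n s ω) - ∫ s in (0:ℝ)..t, f s|} = μ (S' n) := by
      apply measure_congr
      rw [Filter.eventuallyEq_set]
      filter_upwards [hae] with ω hω
      exact hω.1
    have hsub : μ (A n) ≤ μ (M n) + μ ((S' n)ᶜ) := by
      have h1 : μ (A n) ≤ μ ((A n ∩ S' n) ∪ (S' n)ᶜ) := by
        apply measure_mono
        intro ω hω
        by_cases h : ω ∈ S' n
        · exact Or.inl ⟨hω, h⟩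
        · exact Or.inr h
      refine h1.trans ((measure_union_le _ _).trans (add_le_add_left ?_ _))
      refine measure_mono_ae ?_
      filter_upwards [hae] with ω hω h
      exact hω.2 h.1 h.2
    have hcompl : μ ((S' n)ᶜ) = 1 - μ (S' n) := prob_compl_eq_one_sub (hS'_meas n)
    have hAδ : 1 - μ (A n) ≤ ENNReal.ofReal δ := by
      rw [tsub_le_iff_right]
      have : ENNReal.ofReal δ + (1 - ENNReal.ofReal δ) = 1 :=
        add_tsub_cancel_of_le (ENNReal.ofReal_le_one.2 hδ1.le)
      calc (1:ℝ≥0∞) = ENNReal.ofReal δ + (1 - ENNReal.ofReal δ) := this.symm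
        _ ≤ ENNReal.ofReal δ + μ (A n) := add_le_add_right hA1.le _
    rw [hSS']
    have hS'le : μ (S' n) ≤ (1 - μ (A n)) + μ (M n) := by
      have h2 : μ (A n) - μ (M n) ≤ μ ((S' n)ᶜ) := tsub_le_iff_right.2 (by
        rw [add_comm]; exact hsub)
      have h3 : μ (S' n) = 1 - μ ((S' n)ᶜ) := by
        rw [hcompl, ENNReal.sub_sub_cancel ENNReal.one_ne_top prob_le_one]
      rw [h3]
      calc 1 - μ ((S' n)ᶜ) ≤ 1 - (μ (A n) - μ (M n)) := tsub_le_tsub_left h2 1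
        _ ≤ 1 - μ (A n) + μ (M n) := tsub_tsub_le_tsub_add
    calc μ (S' n) ≤ (1 - μ (A n)) + μ (M n) := hS'le
      _ ≤ ENNReal.ofReal δ + ENNReal.ofReal δ := add_le_add hAδ hM1
      _ ≤ η := hδη
  obtain ⟨N, hN⟩ := eventually_atTop.1 hS_ev
  exact ⟨N, hN⟩
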